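/- arXiv:2112.14698 — 3 statements merged into one kernel-verified Lean document; each statement's English description precedes it below -/
import Mathlib

section
/- The optimal covariance matrix minimizing the stealth attack cost F(Σ_AA) = (1/2)(tr(Σ_YY^{-1} Σ_AA) - log det(Σ_AA + σ²I) + log det(Σ_YY)), where Σ_YY = H Σ_XX Hᵀ + σ²I, over positive semidefinite matrices Σ_AA, is Σ_AA* = H Σ_XX Hᵀ. -/
open Matrix

/-- The trace of a real hermitian matrix equals the sum of its eigenvalues. -/
lemma aux_trace_eq_sum_eigenvalues {k : ℕ} {A : Matrix (Fin k) (Fin k) ℝ}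
    (hA : A.IsHermitian) : A.trace = ∑ i, hA.eigenvalues i := by
  rw [hA.trace_eq_sum_eigenvalues]
  simp

/-- For a positive semidefinite real matrix with positive determinant,
`log det M ≤ trace M - k`. -/
lemma aux_log_det_le {k : ℕ} {M : Matrix (Fin k) (Fin k) ℝ}
    (hM : M.PosSemidef) (hdet : 0 < M.det) :
    Real.log M.det ≤ M.trace - k := by
  have hd : M.det = ∏ i, hM.1.eigenvalues i := by
    rw [hM.1.det_eq_prod_eigenvalues]; norm_num
  have hpos : ∀ i, 0 < hM.1.eigenvalues i := by
    intro i
    rcases (hM.eigenvalues_nonneg i).lt_or_eq with h | h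
    · exact h
    · exfalso
      rw [hd] at hdet
      exact absurd (Finset.prod_eq_zero (Finset.mem_univ i) h.symm) (by linarith)
  rw [hd, Real.log_prod fun i _ => (hpos i).ne',
    aux_trace_eq_sum_eigenvalues hM.1]
  have h1 : ∀ i ∈ Finset.univ, Real.log (hM.1.eigenvalues i) ≤ hM.1.eigenvalues i - 1 :=
    fun i _ => Real.log_le_sub_one_of_pos (hpos i)
  calc ∑ i, Real.log (hM.1.eigenvalues i) ≤ ∑ i, (hM.1.eigenvalues i - 1) :=
        Finset.sum_le_sum h1
    _ = (∑ i, hM.1.eigenvalues i) - k := by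
        rw [Finset.sum_sub_distrib]; simp

/-- The optimal covariance matrix minimizing the stealth attack cost
`F(Σ_AA) = (1/2)(tr(Σ_YY⁻¹ Σ_AA) - log det(Σ_AA + σ²I) + log det Σ_YY)`,
with `Σ_YY = H Σ_XX Hᵀ + σ²I`, over positive semidefinite matrices is `H Σ_XX Hᵀ`. -/
theorem stmt0 {m n : ℕ} (H : Matrix (Fin m) (Fin n) ℝ)
    (Sxx : Matrix (Fin n) (Fin n) ℝ) (hSxx : Sxx.PosSemidef)
    (σ : ℝ) (hσ : 0 < σ)
    (Syy : Matrix (Fin m) (Fin m) ℝ)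
    (hSyy : Syy = H * Sxx * Hᵀ + σ ^ 2 • (1 : Matrix (Fin m) (Fin m) ℝ))
    (F : Matrix (Fin m) (Fin m) ℝ → ℝ)
    (hF : ∀ S, F S = (1 / 2) * ((Syy⁻¹ * S).trace
      - Real.log (S + σ ^ 2 • (1 : Matrix (Fin m) (Fin m) ℝ)).det
      + Real.log Syy.det)) :
    ∀ S : Matrix (Fin m) (Fin m) ℝ, S.PosSemidef → F (H * Sxx * Hᵀ) ≤ F S := by
  intro S hS
  -- basic positivity facts
  have hA : (H * Sxx * Hᵀ).PosSemidef := by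
    have := hSxx.mul_mul_conjTranspose_same H
    rwa [conjTranspose_eq_transpose_of_trivial] at this
  have hsm : (σ ^ 2 • (1 : Matrix (Fin m) (Fin m) ℝ)).PosDef := by
    rw [smul_one_eq_diagonal]
    exact posDef_diagonal_iff.mpr fun i => by positivity
  have hSyyd : Syy.PosDef := hSyy ▸ Matrix.PosDef.posSemidef_add hA hsm
  have hT : (S + σ ^ 2 • (1 : Matrix (Fin m) (Fin m) ℝ)).PosDef :=
    Matrix.PosDef.posSemidef_add hS hsm
  set T := S + σ ^ 2 • (1 : Matrix (Fin m) (Fin m) ℝ) with hTdef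
  have hdetSyy : 0 < Syy.det := hSyyd.det_pos
  have hdetT : 0 < T.det := hT.det_pos
  have hUnit : IsUnit Syy.det := hdetSyy.ne'.isUnit
  -- square root of Syy
  set R := (open scoped MatrixOrder in CFC.sqrt Syy) with hRdef
  have hRps : R.PosSemidef := (open scoped MatrixOrder in (CFC.sqrt_nonneg Syy).posSemidef)
  have hRR : R * R = Syy :=
    (open scoped MatrixOrder in CFC.sqrt_mul_sqrt_self Syy hSyyd.posSemidef.nonneg)
  have hdetRR : R.det * R.det = Syy.det := by rw [← det_mul, hRR]
  have hdetR : R.det ≠ 0 := by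
    intro h; rw [h, mul_zero] at hdetRR; exact hdetSyy.ne' hdetRR.symm
  -- N = R⁻¹ T R⁻¹ is positive semidefinite
  set N := R⁻¹ * T * R⁻¹ with hNdef
  have hNps : N.PosSemidef := by
    have := hT.posSemidef.mul_mul_conjTranspose_same R⁻¹
    rwa [conjTranspose_nonsing_inv, hRps.1.eq] at this
  have hdetRinv : R⁻¹.det = R.det⁻¹ := by
    rw [det_nonsing_inv, Ring.inverse_eq_inv']
  have hdetN : N.det = T.det / Syy.det := by
    rw [hNdef, det_mul, det_mul, hdetRinv, ← hdetRR]
    field_simp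
  have hdetNpos : 0 < N.det := by
    rw [hdetN]; positivity
  have hSyyinv : Syy⁻¹ = R⁻¹ * R⁻¹ := by rw [← hRR, Matrix.mul_inv_rev]
  have htrN : N.trace = (Syy⁻¹ * T).trace := by
    rw [hNdef, trace_mul_cycle, hSyyinv]
  -- key inequality
  have hkey : Real.log T.det - Real.log Syy.det ≤ (Syy⁻¹ * T).trace - m := by
    have h1 := aux_log_det_le hNps hdetNpos
    rw [hdetN, Real.log_div hdetT.ne' hdetSyy.ne', htrN] at h1
    exact h1
  -- trace computations
  have hinvmul : Syy⁻¹ * Syy = 1 := Matrix.nonsing_inv_mul Syy hUnit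
  have hAeq : H * Sxx * Hᵀ = Syy - σ ^ 2 • (1 : Matrix (Fin m) (Fin m) ℝ) := by
    rw [hSyy]; abel
  have htr1 : (Syy⁻¹ * (H * Sxx * Hᵀ)).trace
      = (m : ℝ) - σ ^ 2 * Syy⁻¹.trace := by
    rw [hAeq, Matrix.mul_sub, Matrix.mul_smul, Matrix.mul_one, hinvmul, trace_sub,
      trace_smul, trace_one]
    simp
  have htr2 : (Syy⁻¹ * T).trace = (Syy⁻¹ * S).trace + σ ^ 2 * Syy⁻¹.trace := by
    rw [hTdef, Matrix.mul_add, Matrix.mul_smul, Matrix.mul_one, trace_add, trace_smul]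
    simp
  -- the log term for the optimum
  have hlog1 : (H * Sxx * Hᵀ + σ ^ 2 • (1 : Matrix (Fin m) (Fin m) ℝ)) = Syy := hSyy.symm
  rw [hF, hF, hlog1]
  have := hkey
  rw [htr2] at this
  rw [htr1]
  linarith
end

section
/- For a nonnegative random variable T with E[T] < ∞, γ > 0, and β > 0, the equation βη - E[1/(1 + γηT)] = β - 1 has a unique solution η in the interval (0, 1]. -/
open MeasureTheory

/-- For a nonnegative integrable random variable `T`, `γ > 0` and `β > 0`, the equation
`β η - E[1/(1 + γ η T)] = β - 1` has a unique solution `η ∈ (0, 1]`. -/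
theorem stmt3 {Ω : Type*} [MeasureSpace Ω] [IsProbabilityMeasure (volume : Measure Ω)]
    (T : Ω → ℝ) (hTmeas : Measurable T) (hTnonneg : ∀ ω, 0 ≤ T ω)
    (hTint : Integrable T volume) (γ β : ℝ) (hγ : 0 < γ) (hβ : 0 < β) :
    ∃! η : ℝ, η ∈ Set.Ioc (0 : ℝ) 1 ∧
      β * η - ∫ ω, (1 + γ * η * T ω)⁻¹ = β - 1 := by
  set f : ℝ → ℝ := fun η => β * η - ∫ ω, (1 + γ * η * T ω)⁻¹ with hf
  have hmeas : ∀ η : ℝ, AEStronglyMeasurable (fun ω => (1 + γ * η * T ω)⁻¹) volume :=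
    fun η => ((measurable_const.add (measurable_const.mul hTmeas)).inv).aestronglyMeasurable
  have hge1 : ∀ η : ℝ, 0 ≤ η → ∀ ω, (1:ℝ) ≤ 1 + γ * η * T ω := by
    intro η hη ω; have := mul_nonneg (mul_nonneg hγ.le hη) (hTnonneg ω); linarith
  have hbound : ∀ η : ℝ, 0 ≤ η → ∀ ω, ‖(1 + γ * η * T ω)⁻¹‖ ≤ 1 := by
    intro η hη ω
    rw [Real.norm_eq_abs, abs_of_nonneg (inv_nonneg.mpr (by linarith [hge1 η hη ω]))]
    exact inv_le_one_of_one_le₀ (hge1 η hη ω)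
  have hint : ∀ η : ℝ, 0 ≤ η → Integrable (fun ω => (1 + γ * η * T ω)⁻¹) volume := by
    intro η hη
    exact (integrable_const (1:ℝ)).mono' (hmeas η)
      (Filter.Eventually.of_forall (hbound η hη))
  have hImono : ∀ a b : ℝ, 0 ≤ a → a ≤ b →
      ∫ ω, (1 + γ * b * T ω)⁻¹ ≤ ∫ ω, (1 + γ * a * T ω)⁻¹ := by
    intro a b ha hab
    refine integral_mono (hint b (ha.trans hab)) (hint a ha) (fun ω => ?_)
    have h1 := hge1 a ha ω
    have h2 : 1 + γ * a * T ω ≤ 1 + γ * b * T ω := by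
      have := mul_le_mul_of_nonneg_right (mul_le_mul_of_nonneg_left hab hγ.le) (hTnonneg ω)
      linarith
    exact inv_anti₀ (by linarith) h2
  have hmono : StrictMonoOn f (Set.Icc 0 1) := by
    intro a ha b hb hab
    have hI := hImono a b ha.1 hab.le
    simp only [hf]
    nlinarith
  have hcont : ContinuousOn f (Set.Icc 0 1) := by
    apply ContinuousOn.sub (continuousOn_const.mul continuousOn_id)
    rw [continuousOn_iff_continuous_restrict]
    apply continuous_of_dominated (fun η : Set.Icc (0:ℝ) 1 => hmeas η)
        (fun η : Set.Icc (0:ℝ) 1 =>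
          Filter.Eventually.of_forall (hbound η η.2.1)) (integrable_const 1)
    refine Filter.Eventually.of_forall (fun ω => ?_)
    apply Continuous.inv₀
    · exact continuous_const.add ((continuous_const.mul continuous_subtype_val).mul
        continuous_const)
    · intro η; have := hge1 η η.2.1 ω; intro h; rw [h] at this; linarith
  have hf0 : f 0 = -1 := by
    simp [hf]
  have hf1 : β - 1 ≤ f 1 := by
    have hle : ∫ ω, (1 + γ * 1 * T ω)⁻¹ ≤ 1 := by
      calc ∫ ω, (1 + γ * 1 * T ω)⁻¹ ≤ ∫ _ω : Ω, (1:ℝ) :=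
            integral_mono (hint 1 zero_le_one) (integrable_const 1)
              (fun ω => inv_le_one_of_one_le₀ (hge1 1 zero_le_one ω))
        _ = 1 := by simp
    simp only [hf]
    linarith
  obtain ⟨η, hη, hfη⟩ := intermediate_value_Icc (zero_le_one) hcont
    ⟨by rw [hf0]; linarith, hf1⟩
  have hη0 : 0 < η := by
    rcases hη.1.lt_or_eq with h | h
    · exact h
    · exfalso; rw [← h, hf0] at hfη; linarith
  refine ⟨η, ⟨⟨hη0, hη.2⟩, hfη⟩, ?_⟩
  rintro y ⟨hy, hfy⟩
  exact hmono.injOn ⟨hy.1.le, hy.2⟩ hη (by rw [show f y = β - 1 from hfy, hfη])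
end

section
/- If a random vector λ̄ ∈ ℝ^n has an MTP₂ (multivariate totally positive of order 2) distribution and f, g : ℝ^n → ℝ are both coordinatewise nondecreasing (and square-integrable), then Cov(f(λ̄), g(λ̄)) ≥ 0. -/
open MeasureTheory Filter Topology

lemma key_ennreal (u v P Q : ENNReal) (hu : u ≤ P) (hv : v ≤ P) (huv : u * v ≤ P * Q) :
    u + v ≤ P + Q := by
  rcases eq_or_ne P ⊤ with hP | hP
  · simp [hP]
  rcases eq_or_ne Q ⊤ with hQ | hQ
  · simp [hQ]
  rcases eq_or_ne P 0 with hP0 | hP0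
  · simp only [hP0, nonpos_iff_eq_zero] at hu hv
    simp [hu, hv]
  have hufin : u ≠ ⊤ := ne_top_of_le_ne_top hP hu
  have hvfin : v ≠ ⊤ := ne_top_of_le_ne_top hP hv
  rw [← ENNReal.toReal_le_toReal (by finiteness) (by finiteness)]
  rw [ENNReal.toReal_add hufin hvfin, ENNReal.toReal_add hP hQ]
  have h1 : u.toReal ≤ P.toReal := ENNReal.toReal_le_toReal hufin hP |>.2 hu
  have h2 : v.toReal ≤ P.toReal := ENNReal.toReal_le_toReal hvfin hP |>.2 hv
  have h3 : u.toReal * v.toReal ≤ P.toReal * Q.toReal := by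
    rw [← ENNReal.toReal_mul, ← ENNReal.toReal_mul]
    exact ENNReal.toReal_le_toReal (by finiteness) (by finiteness) |>.2 huv
  have hPpos : 0 < P.toReal := ENNReal.toReal_pos hP0 hP
  nlinarith [mul_nonneg (sub_nonneg.2 h1) (sub_nonneg.2 h2), ENNReal.toReal_nonneg (a := u),
    ENNReal.toReal_nonneg (a := v)]


lemma double_split (F G : ℝ → ENNReal) (hF : Measurable F) (hG : Measurable G) :
    (∫⁻ s, F s) * ∫⁻ t, G t
      = ∫⁻ s, ∫⁻ t, (if t < s then F s * G t + F t * G s else 0) := by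
  have h1 : (∫⁻ s, F s) * ∫⁻ t, G t = ∫⁻ s, ∫⁻ t, F s * G t := by
    rw [← lintegral_mul_const _ hF]
    exact lintegral_congr fun s => (lintegral_const_mul _ hG).symm
  rw [h1]
  have m1 : Measurable (fun z : ℝ × ℝ => if z.2 < z.1 then F z.1 * G z.2 else 0) :=
    Measurable.ite (measurableSet_lt measurable_snd measurable_fst)
      ((hF.comp measurable_fst).mul (hG.comp measurable_snd)) measurable_const
  have m2 : Measurable (fun z : ℝ × ℝ => if z.1 < z.2 then F z.1 * G z.2 else 0) :=
    Measurable.ite (measurableSet_lt measurable_fst measurable_snd)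
      ((hF.comp measurable_fst).mul (hG.comp measurable_snd)) measurable_const
  have m1' : Measurable (fun z : ℝ × ℝ => if z.2 < z.1 then F z.2 * G z.1 else 0) :=
    Measurable.ite (measurableSet_lt measurable_snd measurable_fst)
      ((hF.comp measurable_snd).mul (hG.comp measurable_fst)) measurable_const
  have diag : ∀ s : ℝ, (∫⁻ t, (if t = s then F s * G t else 0)) = 0 := by
    intro s
    have : (fun t : ℝ => if t = s then F s * G t else 0)
        = fun t => ({s} : Set ℝ).indicator (fun t => F s * G t) t := by
      funext t; simp [Set.indicator_apply]
    rw [this, lintegral_indicator (measurableSet_singleton s)]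
    simp [Real.volume_singleton]
  have step1 : (∫⁻ s, ∫⁻ t, F s * G t)
      = (∫⁻ s, ∫⁻ t, (if t < s then F s * G t else 0))
        + ∫⁻ s, ∫⁻ t, (if s < t then F s * G t else 0) := by
    have mo1 : Measurable fun s : ℝ => ∫⁻ t, (if t < s then F s * G t else 0) :=
      m1.lintegral_prod_right'
    rw [← lintegral_add_left mo1]
    refine lintegral_congr fun s => ?_
    have mi1 : Measurable fun t : ℝ => (if t < s then F s * G t else 0) :=
      Measurable.ite measurableSet_Iio ((hG.const_mul (F s))) measurable_const
    have mi2 : Measurable fun t : ℝ => (if s < t then F s * G t else 0) :=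
      Measurable.ite measurableSet_Ioi ((hG.const_mul (F s))) measurable_const
    have mi3 : Measurable fun t : ℝ => (if t = s then F s * G t else 0) :=
      Measurable.ite (MeasurableSet.singleton s : MeasurableSet {t : ℝ | t = s})
        ((hG.const_mul (F s))) measurable_const
    rw [← lintegral_add_left mi1]
    have : (∫⁻ t, F s * G t)
        = ∫⁻ t, ((if t < s then F s * G t else 0) + (if s < t then F s * G t else 0)
            + (if t = s then F s * G t else 0)) := by
      refine lintegral_congr fun t => ?_
      rcases lt_trichotomy t s with h | h | h
      · simp [h, not_lt_of_gt h, ne_of_lt h, h.ne]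
      · simp [h, lt_irrefl]
      · simp [h, not_lt_of_gt h, (ne_of_lt h).symm, h.ne']
    rw [this]
    rw [lintegral_add_right _ mi3, lintegral_add_right _ mi2]
    simp [diag s]
  have swap : (∫⁻ s, ∫⁻ t, (if s < t then F s * G t else 0))
      = ∫⁻ s, ∫⁻ t, (if t < s then F t * G s else 0) := by
    exact lintegral_lintegral_swap m2.aemeasurable
  have mo1 : Measurable fun s : ℝ => ∫⁻ t, (if t < s then F s * G t else 0) :=
    m1.lintegral_prod_right'
  rw [step1, swap, ← lintegral_add_left mo1]
  refine lintegral_congr fun s => ?_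
  have mi1 : Measurable fun t : ℝ => (if t < s then F s * G t else 0) :=
    Measurable.ite measurableSet_Iio ((hG.const_mul (F s))) measurable_const
  rw [← lintegral_add_left mi1]
  refine lintegral_congr fun t => ?_
  by_cases h : t < s <;> simp [h]

lemma ad_real (α β γ δ : ℝ → ENNReal) (hα : Measurable α) (hβ : Measurable β)
    (hγ : Measurable γ) (hδ : Measurable δ)
    (h : ∀ s t : ℝ, α s * β t ≤ γ (s ⊔ t) * δ (s ⊓ t)) :
    (∫⁻ s, α s) * ∫⁻ t, β t ≤ (∫⁻ s, γ s) * ∫⁻ t, δ t := by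
  rw [double_split α β hα hβ, double_split γ δ hγ hδ]
  refine lintegral_mono fun s => lintegral_mono fun t => ?_
  by_cases hts : t < s
  · simp only [hts, if_true]
    have hst : s ⊔ t = s := sup_eq_left.2 hts.le
    have hst' : s ⊓ t = t := inf_eq_right.2 hts.le
    have hts1 : t ⊔ s = s := sup_eq_right.2 hts.le
    have hts2 : t ⊓ s = t := inf_eq_left.2 hts.le
    refine key_ennreal _ _ _ _ ?_ ?_ ?_
    · have := h s t; rwa [hst, hst'] at this
    · have := h t s; rwa [hts1, hts2] at this
    · have h1 := h s s
      have h2 := h t t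
      simp only [sup_idem, inf_idem] at h1 h2
      calc α s * β t * (α t * β s) = (α s * β s) * (α t * β t) := by ring
        _ ≤ (γ s * δ s) * (γ t * δ t) := mul_le_mul' h1 h2
        _ = γ s * δ t * (γ t * δ s) := by ring
  · simp [hts]

def ADProp {E : Type*} [MeasurableSpace E] [Lattice E] (ν : Measure E) : Prop :=
  ∀ α β γ δ : E → ENNReal, Measurable α → Measurable β → Measurable γ → Measurable δ →
    (∀ x y : E, α x * β y ≤ γ (x ⊔ y) * δ (x ⊓ y)) →
    (∫⁻ x, α x ∂ν) * ∫⁻ x, β x ∂ν ≤ (∫⁻ x, γ x ∂ν) * ∫⁻ x, δ x ∂ν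

lemma adprop_prod {E : Type*} [MeasurableSpace E] [Lattice E] (ν : Measure E) [SFinite ν]
    (hE : ADProp ν) : ADProp ((volume : Measure ℝ).prod ν) := by
  intro α β γ δ hα hβ hγ hδ h
  have key : ∀ (F : ℝ × E → ENNReal), Measurable F →
      ∫⁻ z, F z ∂((volume : Measure ℝ).prod ν) = ∫⁻ x, (∫⁻ t, F (t, x)) ∂ν :=
    fun F hF => lintegral_prod_symm' F hF
  rw [key α hα, key β hβ, key γ hγ, key δ hδ]
  have mα : Measurable fun x : E => ∫⁻ t, α (t, x) := hα.lintegral_prod_left'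
  have mβ : Measurable fun x : E => ∫⁻ t, β (t, x) := hβ.lintegral_prod_left'
  have mγ : Measurable fun x : E => ∫⁻ t, γ (t, x) := hγ.lintegral_prod_left'
  have mδ : Measurable fun x : E => ∫⁻ t, δ (t, x) := hδ.lintegral_prod_left'
  refine hE _ _ _ _ mα mβ mγ mδ fun x y => ?_
  refine ad_real (fun t => α (t, x)) (fun t => β (t, y)) (fun t => γ (t, x ⊔ y))
    (fun t => δ (t, x ⊓ y)) (hα.comp (measurable_prodMk_right))
    (hβ.comp (measurable_prodMk_right)) (hγ.comp (measurable_prodMk_right))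
    (hδ.comp (measurable_prodMk_right)) fun s t => ?_
  exact h (s, x) (t, y)

lemma adprop_pi : ∀ n : ℕ, ADProp (volume : Measure (Fin n → ℝ)) := by
  intro n
  induction n with
  | zero =>
    intro α β γ δ hα hβ hγ hδ h
    have huniv : (volume : Measure (Fin 0 → ℝ)) Set.univ = 1 := by
      rw [volume_pi, Measure.pi_univ]
      simp
    have hconst : ∀ F : (Fin 0 → ℝ) → ENNReal, ∫⁻ x, F x = F default := by
      intro F
      have : F = fun _ => F default := funext fun x => by
        congr 1; exact Subsingleton.elim _ _
      rw [this, lintegral_const, huniv, mul_one]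
    rw [hconst α, hconst β, hconst γ, hconst δ]
    have := h default default
    simpa using this
  | succ n ih =>
    intro α β γ δ hα hβ hγ hδ h
    set e := MeasurableEquiv.piFinSuccAbove (fun _ : Fin (n + 1) => ℝ) 0 with he
    have mp : MeasurePreserving e (volume : Measure (Fin (n + 1) → ℝ))
        ((volume : Measure ℝ).prod (volume : Measure (Fin n → ℝ))) := by
      have := measurePreserving_piFinSuccAbove (fun _ : Fin (n + 1) => (volume : Measure ℝ)) 0
      rw [volume_pi, volume_pi]
      exact this
    have esup : ∀ a b : ℝ × (Fin n → ℝ), e.symm (a ⊔ b) = e.symm a ⊔ e.symm b := by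
      intro a b
      apply e.injective
      apply Prod.ext
      · simp [he, MeasurableEquiv.piFinSuccAbove, Pi.sup_apply]
      · funext j
        simp [he, MeasurableEquiv.piFinSuccAbove, Pi.sup_apply, Fin.removeNth, Fin.tail,
          Fin.consEquiv, Fin.cons_succ]
    have einf : ∀ a b : ℝ × (Fin n → ℝ), e.symm (a ⊓ b) = e.symm a ⊓ e.symm b := by
      intro a b
      apply e.injective
      apply Prod.ext
      · simp [he, MeasurableEquiv.piFinSuccAbove, Pi.inf_apply]
      · funext j
        simp [he, MeasurableEquiv.piFinSuccAbove, Pi.inf_apply, Fin.removeNth, Fin.tail,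
          Fin.consEquiv, Fin.cons_succ]
    have key : ∀ F : (Fin (n + 1) → ℝ) → ENNReal, Measurable F →
        ∫⁻ x, F x = ∫⁻ z, F (e.symm z) ∂((volume : Measure ℝ).prod volume) := by
      intro F hF
      rw [← (MeasurePreserving.symm e mp).lintegral_comp hF]
    rw [key α hα, key β hβ, key γ hγ, key δ hδ]
    refine adprop_prod _ ih _ _ _ _ (hα.comp e.symm.measurable) (hβ.comp e.symm.measurable)
      (hγ.comp e.symm.measurable) (hδ.comp e.symm.measurable) fun a b => ?_
    rw [esup, einf]
    exact h (e.symm a) (e.symm b)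

lemma closure_add_mem_interior {n : ℕ} {U : Set (Fin n → ℝ)} (hU : IsUpperSet U)
    {ε : ℝ} (hε : 0 < ε) {x : Fin n → ℝ} (hx : x ∈ closure U) :
    x + ε • (fun _ => (1:ℝ)) ∈ interior U := by
  set z : Fin n → ℝ := x + ε • (fun _ => (1:ℝ)) with hz
  have hzi : ∀ i, z i = x i + ε := by
    intro i; simp [hz, Pi.smul_apply, smul_eq_mul]
  rw [mem_interior]
  refine ⟨Metric.ball z (ε / 2), ?_, Metric.isOpen_ball, Metric.mem_ball_self (by linarith)⟩
  intro y hy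
  obtain ⟨u, hu, hxu⟩ := Metric.mem_closure_iff.1 hx (ε / 2) (by linarith)
  refine hU (fun i => ?_) hu
  have h1 : dist (x i) (u i) < ε / 2 := lt_of_le_of_lt (dist_le_pi_dist x u i) hxu
  have h2 : dist (y i) (z i) < ε / 2 :=
    lt_of_le_of_lt (dist_le_pi_dist y z i) (Metric.mem_ball.1 hy)
  rw [Real.dist_eq] at h1 h2
  have h3 := hzi i
  linarith [(abs_lt.1 h1).1, (abs_lt.1 h1).2, (abs_lt.1 h2).1, (abs_lt.1 h2).2]

lemma upperSet_frontier_null {n : ℕ} {U : Set (Fin n → ℝ)} (hU : IsUpperSet U) :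
    volume (frontier U) = 0 := by
  have hbox : frontier U = ⋃ R : ℕ, frontier U ∩ Set.pi Set.univ (fun _ => Set.Icc (-(R:ℝ)) R) := by
    ext x
    simp only [Set.mem_iUnion, Set.mem_inter_iff, Set.mem_pi, Set.mem_univ, forall_true_left,
      Set.mem_Icc]
    constructor
    · intro hx
      refine ⟨⌈‖x‖⌉₊, hx, fun i => ?_⟩
      have h1 : |x i| ≤ ‖x‖ := norm_le_pi_norm x i
      have h2 : ‖x‖ ≤ (⌈‖x‖⌉₊ : ℝ) := Nat.le_ceil _
      constructor
      · linarith [(abs_le.1 (h1.trans h2)).1]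
      · exact (abs_le.1 (h1.trans h2)).2
    · rintro ⟨R, hx, -⟩; exact hx
  rw [hbox]
  refine measure_iUnion_null fun R => ?_
  set A : Set (Fin n → ℝ) := frontier U ∩ Set.pi Set.univ (fun _ => Set.Icc (-(R:ℝ)) R) with hA
  have hAmeas : MeasurableSet A :=
    (isClosed_frontier.measurableSet).inter (MeasurableSet.univ_pi fun i => measurableSet_Icc)
  set C : ENNReal := volume (Set.pi Set.univ (fun _ : Fin n => Set.Icc (-(R:ℝ)-1) (R+1))) with hC
  have hCne : C ≠ ⊤ := by
    rw [hC, volume_pi_pi]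
    exact (ENNReal.prod_lt_top fun i _ => by rw [Real.volume_Icc]; exact ENNReal.ofReal_lt_top).ne
  have hKbound : ∀ K : ℕ, (K : ENNReal) * volume A ≤ C := by
    intro K
    rcases Nat.eq_zero_or_pos K with hK0 | hKpos
    · simp [hK0]
    have hKpos' : (0:ℝ) < (K:ℝ) := by exact_mod_cast hKpos
    set T : ℕ → Set (Fin n → ℝ) :=
      fun k => (fun x => x + ((k : ℝ)/(K : ℝ)) • (fun _ => (1:ℝ))) ⁻¹' A with hT
    have hTmeas : ∀ k, MeasurableSet (T k) := fun k =>
      hAmeas.preimage (measurable_id.add_const _)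
    have hTvol : ∀ k, volume (T k) = volume A := fun k =>
      measure_preimage_add_right volume _ A
    have hTsub : ∀ k ∈ Finset.range K, T k ⊆ Set.pi Set.univ
        (fun _ : Fin n => Set.Icc (-(R:ℝ)-1) (R+1)) := by
      intro k hk x hx
      have hc1 : (0:ℝ) ≤ (k : ℝ)/(K : ℝ) := by positivity
      have hc2 : (k : ℝ)/(K : ℝ) ≤ 1 := by
        rw [div_le_one hKpos']
        exact_mod_cast (Finset.mem_range.1 hk).le
      intro i _
      have hxA := hx.2 i (Set.mem_univ i)
      simp only [Set.mem_Icc, Pi.add_apply, Pi.smul_apply, smul_eq_mul, mul_one] at hxA ⊢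
      constructor <;> linarith [hxA.1, hxA.2]
    have hdisj2 : ∀ a b : ℕ, a < b → b < K → Disjoint (T a) (T b) := by
      intro a b hlt hbK
      refine Set.disjoint_left.2 fun x hxa hxb => ?_
      have h1 : x + ((a : ℝ)/(K : ℝ)) • (fun _ => (1:ℝ)) ∈ frontier U := hxa.1
      have h2 : x + ((b : ℝ)/(K : ℝ)) • (fun _ => (1:ℝ)) ∈ frontier U := hxb.1
      have hab' : (a:ℝ) < (b:ℝ) := by exact_mod_cast hlt
      have hεpos : (0:ℝ) < ((b:ℝ) - (a:ℝ))/(K:ℝ) := div_pos (by linarith) hKpos'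
      have hint : x + ((b : ℝ)/(K : ℝ)) • (fun _ => (1:ℝ)) ∈ interior U := by
        have heq : x + ((b : ℝ)/(K : ℝ)) • (fun _ => (1:ℝ))
            = (x + ((a : ℝ)/(K : ℝ)) • (fun _ => (1:ℝ)))
              + (((b:ℝ) - (a:ℝ))/(K:ℝ)) • (fun _ => (1:ℝ)) := by
          funext i
          simp only [Pi.add_apply, Pi.smul_apply, smul_eq_mul, mul_one]
          ring
        rw [heq]
        exact closure_add_mem_interior hU hεpos (frontier_subset_closure h1)
      rw [← closure_diff_interior] at h2
      exact h2.2 hint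
    have hTdisj : Set.PairwiseDisjoint (↑(Finset.range K)) T := by
      intro a ha b hb hab
      rcases lt_or_gt_of_ne hab with h | h
      · exact hdisj2 a b h (Finset.mem_range.1 hb)
      · exact (hdisj2 b a h (Finset.mem_range.1 ha)).symm
    have hsum : (K : ENNReal) * volume A
        = volume (⋃ k ∈ Finset.range K, T k) := by
      rw [measure_biUnion_finset hTdisj (fun k _ => hTmeas k)]
      simp [hTvol, Finset.sum_const, nsmul_eq_mul]
    rw [hsum]
    refine le_trans (measure_mono (Set.iUnion₂_subset hTsub)) le_rfl
  by_contra hne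
  have hm1 : volume A ≠ ⊤ := by
    intro htop
    have := hKbound 1
    rw [htop] at this
    simp at this
    exact hCne (le_antisymm le_top (this ▸ le_rfl)) |>.elim
  obtain ⟨K, hK⟩ := ENNReal.exists_nat_gt (ENNReal.div_lt_top hCne hne).ne
  have hlt : C < (K : ENNReal) * volume A := by
    have : C = C / volume A * volume A := (ENNReal.div_mul_cancel hne hm1).symm
    rw [this]
    exact ENNReal.mul_lt_mul_left hne hm1 hK
  exact absurd (hKbound K) (not_le.2 hlt)

lemma monotone_ae_eq_measurable {n : ℕ} (f : (Fin n → ℝ) → ℝ) (hf : Monotone f) :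
    ∃ f₀ : (Fin n → ℝ) → ℝ, Measurable f₀ ∧ Monotone f₀ ∧ f₀ =ᵐ[(volume : Measure (Fin n → ℝ))] f := by
  classical
  set S : (Fin n → ℝ) → Set ℝ :=
    fun x => f '' {q | (∃ r : Fin n → ℚ, q = fun i => (r i : ℝ)) ∧ ∀ i, q i < x i} with hS
  have hne : ∀ x, (S x).Nonempty := by
    intro x
    choose r hr using fun i => exists_rat_lt (x i)
    exact ⟨f (fun i => (r i : ℝ)), Set.mem_image_of_mem f ⟨⟨r, rfl⟩, hr⟩⟩
  have hbdd : ∀ x, BddAbove (S x) := by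
    intro x
    refine ⟨f x, fun a ha => ?_⟩
    obtain ⟨q, hq, rfl⟩ := ha
    exact hf (fun i => (hq.2 i).le)
  set f₀ : (Fin n → ℝ) → ℝ := fun x => sSup (S x) with hf₀
  have hSmono : ∀ {x y}, x ≤ y → S x ⊆ S y := by
    intro x y hxy
    refine Set.image_mono fun q hq => ⟨hq.1, fun i => lt_of_lt_of_le (hq.2 i) (hxy i)⟩
  have hmono : Monotone f₀ := fun x y hxy => csSup_le_csSup (hbdd y) (hne x) (hSmono hxy)
  have hle : ∀ x, f₀ x ≤ f x := fun x => csSup_le (hne x) fun a ha => by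
    obtain ⟨q, hq, rfl⟩ := ha
    exact hf (fun i => (hq.2 i).le)
  have hopen : ∀ c : ℝ, IsOpen {x | c < f₀ x} := by
    intro c
    rw [isOpen_iff_forall_mem_open]
    intro x hx
    obtain ⟨a, ha, hca⟩ := exists_lt_of_lt_csSup (hne x) hx
    obtain ⟨q, hq, rfl⟩ := ha
    refine ⟨{y | ∀ i, q i < y i}, fun y hy => ?_, ?_, hq.2⟩
    · have : f q ∈ S y := Set.mem_image_of_mem f ⟨hq.1, hy⟩
      exact lt_of_lt_of_le hca (le_csSup (hbdd y) this)
    · have : {y : Fin n → ℝ | ∀ i, q i < y i} = Set.pi Set.univ (fun i => Set.Ioi (q i)) := by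
        ext y; simp [Set.mem_pi]
      rw [this]
      exact isOpen_set_pi Set.finite_univ fun i _ => isOpen_Ioi
  have hmeas : Measurable f₀ := by
    refine measurable_of_Ioi fun c => ?_
    exact (hopen c).measurableSet
  refine ⟨f₀, hmeas, hmono, ?_⟩
  have hsub : {x | f₀ x ≠ f x} ⊆ ⋃ c : ℚ, frontier {y | (c:ℝ) < f y} := by
    intro x hx
    have hlt : f₀ x < f x := lt_of_le_of_ne (hle x) hx
    obtain ⟨c, hc1, hc2⟩ := exists_rat_btwn hlt
    refine Set.mem_iUnion.2 ⟨c, ?_⟩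
    have hxU : x ∈ {y | (c:ℝ) < f y} := hc2
    have hxnotint : x ∉ interior {y | (c:ℝ) < f y} := by
      intro hint
      rw [mem_interior_iff_mem_nhds, Metric.mem_nhds_iff] at hint
      obtain ⟨ε, hε, hball⟩ := hint
      choose r hr1 hr2 using fun i => exists_rat_btwn (show x i - ε/2 < x i by linarith)
      have hq : (fun i => (r i : ℝ)) ∈ Metric.ball x ε := by
        rw [Metric.mem_ball]
        rcases isEmpty_or_nonempty (Fin n) with hemp | hnemp
        · simpa [dist_pi_def] using hε
        · rw [dist_pi_lt_iff hε]
          intro i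
          rw [Real.dist_eq, abs_lt]
          constructor <;> [linarith [hr1 i, hr2 i]; linarith [hr1 i, hr2 i]]
      have hfq : (c:ℝ) < f (fun i => (r i : ℝ)) := hball hq
      have : f (fun i => (r i : ℝ)) ∈ S x :=
        Set.mem_image_of_mem f ⟨⟨r, rfl⟩, fun i => hr2 i⟩
      have := le_csSup (hbdd x) this
      linarith
    rw [← closure_diff_interior]
    exact ⟨subset_closure hxU, hxnotint⟩
  have hnull : (volume : Measure (Fin n → ℝ)) {x | f₀ x ≠ f x} = 0 := by
    refine measure_mono_null hsub (measure_iUnion_null fun c => ?_)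
    exact upperSet_frontier_null (fun a b hab ha => lt_of_lt_of_le ha (hf hab))
  exact ae_iff.2 hnull

lemma cov_nonneg_of_bounded {n : ℕ} (p : (Fin n → ℝ) → ℝ) (hp : ∀ x, 0 ≤ p x)
    (hpmeas : Measurable p) (μ : Measure (Fin n → ℝ))
    (hμ : μ = volume.withDensity fun x => ENNReal.ofReal (p x))
    (hprob : IsProbabilityMeasure μ)
    (hMTP2 : ∀ x y : Fin n → ℝ, p x * p y ≤ p (x ⊔ y) * p (x ⊓ y))
    (F G : (Fin n → ℝ) → ℝ) (hFmono : Monotone F) (hGmono : Monotone G)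
    (hFm : Measurable F) (hGm : Measurable G) (C D : ℝ)
    (hFnn : ∀ x, 0 ≤ F x) (hFbd : ∀ x, F x ≤ C) (hGnn : ∀ x, 0 ≤ G x) (hGbd : ∀ x, G x ≤ D) :
    (∫ x, F x ∂μ) * ∫ x, G x ∂μ ≤ ∫ x, F x * G x ∂μ := by
  have hFi : Integrable F μ := by
    refine (integrable_const C).mono' hFm.aestronglyMeasurable (ae_of_all _ fun x => ?_)
    rw [Real.norm_eq_abs, abs_of_nonneg (hFnn x)]; exact hFbd x
  have hGi : Integrable G μ := by
    refine (integrable_const D).mono' hGm.aestronglyMeasurable (ae_of_all _ fun x => ?_)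
    rw [Real.norm_eq_abs, abs_of_nonneg (hGnn x)]; exact hGbd x
  have hFGi : Integrable (fun x => F x * G x) μ := by
    refine (integrable_const (C * D)).mono' (hFm.mul hGm).aestronglyMeasurable
      (ae_of_all _ fun x => ?_)
    rw [Real.norm_eq_abs, abs_of_nonneg (mul_nonneg (hFnn x) (hGnn x))]
    exact mul_le_mul (hFbd x) (hGbd x) (hGnn x) ((hFnn x).trans (hFbd x))
  -- the four ENNReal functions
  set α : (Fin n → ℝ) → ENNReal := fun x => ENNReal.ofReal (p x) * ENNReal.ofReal (F x) with hα
  set β : (Fin n → ℝ) → ENNReal := fun x => ENNReal.ofReal (p x) * ENNReal.ofReal (G x) with hβ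
  set γ : (Fin n → ℝ) → ENNReal :=
    fun x => ENNReal.ofReal (p x) * ENNReal.ofReal (F x * G x) with hγ
  set δ : (Fin n → ℝ) → ENNReal := fun x => ENNReal.ofReal (p x) with hδ
  have hαm : Measurable α := (hpmeas.ennreal_ofReal).mul (hFm.ennreal_ofReal)
  have hβm : Measurable β := (hpmeas.ennreal_ofReal).mul (hGm.ennreal_ofReal)
  have hγm : Measurable γ := (hpmeas.ennreal_ofReal).mul ((hFm.mul hGm).ennreal_ofReal)
  have hδm : Measurable δ := hpmeas.ennreal_ofReal
  have hcond : ∀ x y : Fin n → ℝ, α x * β y ≤ γ (x ⊔ y) * δ (x ⊓ y) := by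
    intro x y
    have e1 : α x * β y = ENNReal.ofReal (p x * F x * (p y * G y)) := by
      rw [hα, hβ, ENNReal.ofReal_mul (mul_nonneg (hp x) (hFnn x)),
        ENNReal.ofReal_mul (hp x), ENNReal.ofReal_mul (hp y)]
    have e2 : γ (x ⊔ y) * δ (x ⊓ y)
        = ENNReal.ofReal (p (x ⊔ y) * (F (x ⊔ y) * G (x ⊔ y)) * p (x ⊓ y)) := by
      rw [hγ, hδ, ENNReal.ofReal_mul (mul_nonneg (hp (x ⊔ y))
        (mul_nonneg (hFnn _) (hGnn _))), ENNReal.ofReal_mul (hp (x ⊔ y))]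
    rw [e1, e2]
    refine ENNReal.ofReal_le_ofReal ?_
    have h1 : F x * G y ≤ F (x ⊔ y) * G (x ⊔ y) :=
      mul_le_mul (hFmono le_sup_left) (hGmono le_sup_right) (hGnn y) ((hFnn _))
    have h2 := hMTP2 x y
    calc p x * F x * (p y * G y) = (p x * p y) * (F x * G y) := by ring
      _ ≤ (p (x ⊔ y) * p (x ⊓ y)) * (F (x ⊔ y) * G (x ⊔ y)) := by
          refine mul_le_mul h2 h1 (mul_nonneg (hFnn x) (hGnn y))
            (mul_nonneg (hp _) (hp _))
      _ = p (x ⊔ y) * (F (x ⊔ y) * G (x ⊔ y)) * p (x ⊓ y) := by ring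
  have had := adprop_pi n α β γ δ hαm hβm hγm hδm hcond
  -- rewrite lintegrals
  have hkey : ∀ (H : (Fin n → ℝ) → ℝ), Measurable H → (∀ x, 0 ≤ H x) → Integrable H μ →
      ∫⁻ x, ENNReal.ofReal (p x) * ENNReal.ofReal (H x) = ENNReal.ofReal (∫ x, H x ∂μ) := by
    intro H hHm hHnn hHi
    have h1 : ∫⁻ x, ENNReal.ofReal (H x) ∂μ
        = ∫⁻ x, ENNReal.ofReal (p x) * ENNReal.ofReal (H x) := by
      rw [hμ, lintegral_withDensity_eq_lintegral_mul volume hpmeas.ennreal_ofReal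
        hHm.ennreal_ofReal]
      rfl
    rw [← h1, ← ofReal_integral_eq_lintegral_ofReal hHi (ae_of_all _ hHnn)]
  have hδ1 : ∫⁻ x, δ x = 1 := by
    have : μ Set.univ = 1 := hprob.measure_univ
    rw [hμ, withDensity_apply _ MeasurableSet.univ, Measure.restrict_univ] at this
    exact this
  rw [hkey F hFm hFnn hFi, hkey G hGm hGnn hGi,
    hkey (fun x => F x * G x) (hFm.mul hGm) (fun x => mul_nonneg (hFnn x) (hGnn x)) hFGi,
    hδ1, mul_one, ← ENNReal.ofReal_mul (integral_nonneg hFnn)] at had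
  exact (ENNReal.ofReal_le_ofReal_iff (integral_nonneg
    (fun x => mul_nonneg (hFnn x) (hGnn x)))).1 had

lemma clamp_abs_le (a : ℝ) (k : ℕ) : |max (min a (k:ℝ)) (-(k:ℝ))| ≤ |a| := by
  have hk : (0:ℝ) ≤ k := k.cast_nonneg
  have h1 : max (min a (k:ℝ)) (-(k:ℝ)) ≤ |a| :=
    max_le ((min_le_left _ _).trans (le_abs_self a))
      ((neg_nonpos.2 hk).trans (abs_nonneg a))
  have h2 : -|a| ≤ max (min a (k:ℝ)) (-(k:ℝ)) := by
    rcases le_total a 0 with h | h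
    · have ha : -|a| = a := by rw [abs_of_nonpos h, neg_neg]
      rw [ha]
      exact le_trans (le_min le_rfl (h.trans hk)) (le_max_left _ _)
    · exact le_trans (neg_nonpos.2 (abs_nonneg a))
        (le_trans (le_min h hk) (le_max_left _ _))
  exact abs_le.2 ⟨h2, h1⟩

lemma clamp_eventually (a : ℝ) :
    Tendsto (fun k : ℕ => max (min a (k:ℝ)) (-(k:ℝ))) atTop (𝓝 a) := by
  apply tendsto_atTop_of_eventually_const (i₀ := ⌈|a|⌉₊)
  intro k hk
  have h1 : |a| ≤ (k:ℝ) := le_trans (Nat.le_ceil _) (by exact_mod_cast hk)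
  rw [min_eq_left (le_trans (le_abs_self a) h1),
    max_eq_left (by linarith [neg_abs_le a])]

/-- If a random vector in `ℝⁿ` has an MTP₂ density `p` (i.e.
`p x * p y ≤ p (x ⊔ y) * p (x ⊓ y)` for coordinatewise max/min) and `f`, `g` are
coordinatewise nondecreasing square-integrable functions, then `Cov(f, g) ≥ 0`. -/
theorem stmt11 {n : ℕ} (p : (Fin n → ℝ) → ℝ) (hp : ∀ x, 0 ≤ p x) (hpmeas : Measurable p)
    (μ : Measure (Fin n → ℝ))
    (hμ : μ = volume.withDensity fun x => ENNReal.ofReal (p x))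
    (hprob : IsProbabilityMeasure μ)
    (hMTP2 : ∀ x y : Fin n → ℝ, p x * p y ≤ p (x ⊔ y) * p (x ⊓ y))
    (f g : (Fin n → ℝ) → ℝ) (hf : Monotone f) (hg : Monotone g)
    (hf2 : MemLp f 2 μ) (hg2 : MemLp g 2 μ) :
    0 ≤ ∫ x, f x * g x ∂μ - (∫ x, f x ∂μ) * ∫ x, g x ∂μ := by
  obtain ⟨f₀, hf₀m, hf₀mono, hf₀ae⟩ := monotone_ae_eq_measurable f hf
  obtain ⟨g₀, hg₀m, hg₀mono, hg₀ae⟩ := monotone_ae_eq_measurable g hg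
  have hac : μ ≪ (volume : Measure (Fin n → ℝ)) := by
    rw [hμ]; exact withDensity_absolutelyContinuous _ _
  have hfae : f₀ =ᵐ[μ] f := hac.ae_eq hf₀ae
  have hgae : g₀ =ᵐ[μ] g := hac.ae_eq hg₀ae
  have e1 : ∫ x, f x * g x ∂μ = ∫ x, f₀ x * g₀ x ∂μ :=
    integral_congr_ae ((hfae.mul hgae).symm)
  have e2 : ∫ x, f x ∂μ = ∫ x, f₀ x ∂μ := integral_congr_ae hfae.symm
  have e3 : ∫ x, g x ∂μ = ∫ x, g₀ x ∂μ := integral_congr_ae hgae.symm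
  rw [e1, e2, e3]
  have hf2' : MemLp f₀ 2 μ := hf2.ae_eq hfae.symm
  have hg2' : MemLp g₀ 2 μ := hg2.ae_eq hgae.symm
  have hfi : Integrable f₀ μ :=
    memLp_one_iff_integrable.1 (hf2'.mono_exponent (by norm_num))
  have hgi : Integrable g₀ μ :=
    memLp_one_iff_integrable.1 (hg2'.mono_exponent (by norm_num))
  set b : (Fin n → ℝ) → ℝ := fun x => (f₀ x ^ 2 + g₀ x ^ 2) / 2 with hb
  have hbi : Integrable b μ := ((hf2'.integrable_sq).add hg2'.integrable_sq).div_const 2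
  have habs : ∀ x, |f₀ x| * |g₀ x| ≤ b x := by
    intro x
    rw [hb]
    nlinarith [sq_nonneg (|f₀ x| - |g₀ x|), sq_abs (f₀ x), sq_abs (g₀ x)]
  have hprodi : Integrable (fun x => f₀ x * g₀ x) μ := by
    refine hbi.mono' (hf₀m.mul hg₀m).aestronglyMeasurable (ae_of_all _ fun x => ?_)
    rw [Real.norm_eq_abs, abs_mul]
    exact habs x
  -- truncations
  set Fk : ℕ → (Fin n → ℝ) → ℝ := fun k x => max (min (f₀ x) (k:ℝ)) (-(k:ℝ)) with hFk
  set Gk : ℕ → (Fin n → ℝ) → ℝ := fun k x => max (min (g₀ x) (k:ℝ)) (-(k:ℝ)) with hGk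
  have hFkmono : ∀ k, Monotone (Fk k) := fun k =>
    (hf₀mono.min monotone_const).max monotone_const
  have hGkmono : ∀ k, Monotone (Gk k) := fun k =>
    (hg₀mono.min monotone_const).max monotone_const
  have hFkmeas : ∀ k, Measurable (Fk k) := fun k =>
    (hf₀m.min measurable_const).max measurable_const
  have hGkmeas : ∀ k, Measurable (Gk k) := fun k =>
    (hg₀m.min measurable_const).max measurable_const
  have hFklb : ∀ (k : ℕ) x, -(k:ℝ) ≤ Fk k x := fun k x => le_max_right _ _
  have hFkub : ∀ (k : ℕ) x, Fk k x ≤ (k:ℝ) := fun k x =>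
    max_le (min_le_right _ _) (by linarith [Nat.cast_nonneg (α := ℝ) k])
  have hGklb : ∀ (k : ℕ) x, -(k:ℝ) ≤ Gk k x := fun k x => le_max_right _ _
  have hGkub : ∀ (k : ℕ) x, Gk k x ≤ (k:ℝ) := fun k x =>
    max_le (min_le_right _ _) (by linarith [Nat.cast_nonneg (α := ℝ) k])
  have hFki : ∀ k, Integrable (Fk k) μ := by
    intro k
    refine (integrable_const ((k:ℝ))).mono' (hFkmeas k).aestronglyMeasurable
      (ae_of_all _ fun x => ?_)
    rw [Real.norm_eq_abs]
    exact abs_le.2 ⟨hFklb k x, hFkub k x⟩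
  have hGki : ∀ k, Integrable (Gk k) μ := by
    intro k
    refine (integrable_const ((k:ℝ))).mono' (hGkmeas k).aestronglyMeasurable
      (ae_of_all _ fun x => ?_)
    rw [Real.norm_eq_abs]
    exact abs_le.2 ⟨hGklb k x, hGkub k x⟩
  have hFGki : ∀ k, Integrable (fun x => Fk k x * Gk k x) μ := by
    intro k
    refine (integrable_const ((k:ℝ) * (k:ℝ))).mono'
      ((hFkmeas k).mul (hGkmeas k)).aestronglyMeasurable (ae_of_all _ fun x => ?_)
    rw [Real.norm_eq_abs, abs_mul]
    exact mul_le_mul (abs_le.2 ⟨hFklb k x, hFkub k x⟩) (abs_le.2 ⟨hGklb k x, hGkub k x⟩)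
      (abs_nonneg _) (Nat.cast_nonneg k)
  -- per-k covariance inequality
  have core : ∀ k : ℕ, (∫ x, Fk k x ∂μ) * ∫ x, Gk k x ∂μ ≤ ∫ x, Fk k x * Gk k x ∂μ := by
    intro k
    have i1 : Integrable (fun x => Fk k x * Gk k x + (k:ℝ) * Fk k x) μ :=
      (hFGki k).add ((hFki k).const_mul _)
    have i2 : Integrable (fun x => (k:ℝ) * Gk k x + (k:ℝ) * (k:ℝ)) μ :=
      ((hGki k).const_mul _).add (integrable_const _)
    have had := cov_nonneg_of_bounded p hp hpmeas μ hμ hprob hMTP2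
      (fun x => Fk k x + (k:ℝ)) (fun x => Gk k x + (k:ℝ))
      ((hFkmono k).add_const _) ((hGkmono k).add_const _)
      ((hFkmeas k).add_const _) ((hGkmeas k).add_const _)
      (2 * k) (2 * k)
      (fun x => by show (0:ℝ) ≤ Fk k x + (k:ℝ); linarith [hFklb k x])
      (fun x => by show Fk k x + (k:ℝ) ≤ 2 * (k:ℝ); linarith [hFkub k x])
      (fun x => by show (0:ℝ) ≤ Gk k x + (k:ℝ); linarith [hGklb k x])
      (fun x => by show Gk k x + (k:ℝ) ≤ 2 * (k:ℝ); linarith [hGkub k x])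
    have eF : ∫ x, (Fk k x + (k:ℝ)) ∂μ = (∫ x, Fk k x ∂μ) + (k:ℝ) := by
      rw [integral_add (hFki k) (integrable_const _), integral_const]
      simp
    have eG : ∫ x, (Gk k x + (k:ℝ)) ∂μ = (∫ x, Gk k x ∂μ) + (k:ℝ) := by
      rw [integral_add (hGki k) (integrable_const _), integral_const]
      simp
    have eFG : ∫ x, (Fk k x + (k:ℝ)) * (Gk k x + (k:ℝ)) ∂μ
        = (∫ x, Fk k x * Gk k x ∂μ) + (k:ℝ) * (∫ x, Fk k x ∂μ)
          + (k:ℝ) * (∫ x, Gk k x ∂μ) + (k:ℝ) * (k:ℝ) := by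
      have hre : ∀ x, (Fk k x + (k:ℝ)) * (Gk k x + (k:ℝ))
          = Fk k x * Gk k x + (k:ℝ) * Fk k x + ((k:ℝ) * Gk k x + (k:ℝ) * (k:ℝ)) := by
        intro x; ring
      simp_rw [hre]
      rw [integral_add i1 i2, integral_add (hFGki k) ((hFki k).const_mul _),
        integral_add ((hGki k).const_mul _) (integrable_const _),
        integral_const_mul, integral_const_mul, integral_const]
      simp
      ring
    rw [eF, eG, eFG] at had
    nlinarith [had]
  -- limits
  have tendF : Tendsto (fun k => ∫ x, Fk k x ∂μ) atTop (𝓝 (∫ x, f₀ x ∂μ)) := by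
    refine tendsto_integral_of_dominated_convergence (fun x => |f₀ x|)
      (fun k => (hFkmeas k).aestronglyMeasurable) hfi.abs
      (fun k => ae_of_all _ fun x => ?_) (ae_of_all _ fun x => clamp_eventually (f₀ x))
    rw [Real.norm_eq_abs]
    exact clamp_abs_le (f₀ x) k
  have tendG : Tendsto (fun k => ∫ x, Gk k x ∂μ) atTop (𝓝 (∫ x, g₀ x ∂μ)) := by
    refine tendsto_integral_of_dominated_convergence (fun x => |g₀ x|)
      (fun k => (hGkmeas k).aestronglyMeasurable) hgi.abs
      (fun k => ae_of_all _ fun x => ?_) (ae_of_all _ fun x => clamp_eventually (g₀ x))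
    rw [Real.norm_eq_abs]
    exact clamp_abs_le (g₀ x) k
  have tendFG : Tendsto (fun k => ∫ x, Fk k x * Gk k x ∂μ) atTop
      (𝓝 (∫ x, f₀ x * g₀ x ∂μ)) := by
    refine tendsto_integral_of_dominated_convergence b
      (fun k => ((hFkmeas k).mul (hGkmeas k)).aestronglyMeasurable) hbi
      (fun k => ae_of_all _ fun x => ?_) (ae_of_all _ fun x => ?_)
    · rw [Real.norm_eq_abs, abs_mul]
      exact le_trans (mul_le_mul (clamp_abs_le (f₀ x) k) (clamp_abs_le (g₀ x) k)
        (abs_nonneg _) (abs_nonneg _)) (habs x)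
    · exact (clamp_eventually (f₀ x)).mul (clamp_eventually (g₀ x))
  have tendall : Tendsto (fun k => (∫ x, Fk k x * Gk k x ∂μ)
      - (∫ x, Fk k x ∂μ) * ∫ x, Gk k x ∂μ) atTop
      (𝓝 ((∫ x, f₀ x * g₀ x ∂μ) - (∫ x, f₀ x ∂μ) * ∫ x, g₀ x ∂μ)) :=
    tendFG.sub (tendF.mul tendG)
  exact ge_of_tendsto' tendall fun k => sub_nonneg.2 (core k)
end
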